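/- (Nonlinear Gronwall inequality, case 0 ≤ α < 1) Let u be a nonnegative continuous function satisfying u(t) ≤ c + ∫_{t₀}^t [f(s)u(s) + g(s)u(s)^α] ds for t ≥ t₀, where c ≥ 0, 0 ≤ α < 1, and f, g are continuous nonnegative functions. Then u(t)^{1−α} ≤ c^{1−α} exp((1−α)∫_{t₀}^t f(s) ds) + (1−α) ∫_{t₀}^t g(s) exp((1−α)∫_s^t f(r) dr) ds. -/

import Mathlib

open Set intervalIntegral

private lemma primCont (t₀ : ℝ) (h : ℝ → ℝ) (hcont : ContinuousOn h (Ici t₀)) :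
    ContinuousOn (fun t => ∫ s in t₀..t, h s) (Ici t₀) := by
  intro a ha
  have hle : t₀ ≤ a + 1 := le_trans ha (by linarith)
  have hsub : uIcc t₀ (a + 1) ⊆ Ici t₀ := by
    rw [uIcc_of_le hle]; exact Icc_subset_Ici_self
  have hint : MeasureTheory.IntegrableOn h (uIcc t₀ (a + 1)) MeasureTheory.volume := by
    rw [uIcc_of_le hle]
    exact (hcont.mono (by rw [← uIcc_of_le hle]; exact hsub)).integrableOn_Icc
  have hcc := intervalIntegral.continuousOn_primitive_interval hint
  have hmem : uIcc t₀ (a + 1) ∈ nhdsWithin a (Ici t₀) := by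
    rw [uIcc_of_le hle]
    have : Icc t₀ (a + 1) = Ici t₀ ∩ Iic (a + 1) := (Ici_inter_Iic).symm
    rw [this]
    exact inter_mem_nhdsWithin _ (Iic_mem_nhds (by linarith))
  exact (hcc a (by rw [uIcc_of_le hle]; exact ⟨ha, by linarith⟩)).mono_of_mem_nhdsWithin hmem

private lemma primDeriv (t₀ : ℝ) (h : ℝ → ℝ) (hcont : ContinuousOn h (Ici t₀))
    {x : ℝ} (hx : t₀ < x) :
    HasDerivAt (fun t => ∫ s in t₀..t, h s) (h x) x := by
  have hopen : IsOpen (Ioi t₀) := isOpen_Ioi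
  have hconto : ContinuousOn h (Ioi t₀) := hcont.mono Ioi_subset_Ici_self
  have hint : IntervalIntegrable h MeasureTheory.volume t₀ x :=
    (hcont.mono (by rw [uIcc_of_le hx.le]; exact Icc_subset_Ici_self)).intervalIntegrable
  have hmeas :=
    hconto.stronglyMeasurableAtFilter (μ := MeasureTheory.volume) hopen x hx
  have hca : ContinuousAt h x :=
    hcont.continuousAt (Ici_mem_nhds hx)
  exact intervalIntegral.integral_hasDerivAt_right hint hmeas hca

private lemma gronwall_key (t₀ c α : ℝ) (hc : 0 < c) (hα0 : 0 ≤ α) (hα1 : α < 1)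
    (u f g : ℝ → ℝ)
    (hu_cont : ContinuousOn u (Ici t₀))
    (hf_cont : ContinuousOn f (Ici t₀)) (hg_cont : ContinuousOn g (Ici t₀))
    (hu_nonneg : ∀ t ∈ Ici t₀, 0 ≤ u t)
    (hf_nonneg : ∀ t ∈ Ici t₀, 0 ≤ f t) (hg_nonneg : ∀ t ∈ Ici t₀, 0 ≤ g t)
    (hineq : ∀ t ∈ Ici t₀, u t ≤ c + ∫ s in t₀..t, (f s * u s + g s * u s ^ α)) :
    ∀ t ∈ Ici t₀,
      u t ^ (1 - α) ≤
        c ^ (1 - α) * Real.exp ((1 - α) * ∫ s in t₀..t, f s) +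
          (1 - α) * ∫ s in t₀..t, g s * Real.exp ((1 - α) * ∫ r in s..t, f r) := by
  have hβ : (0:ℝ) < 1 - α := by linarith
  set β := 1 - α with hβdef
  -- integrand continuity
  have huα_cont : ContinuousOn (fun s => u s ^ α) (Ici t₀) :=
    hu_cont.rpow_const (fun x _ => Or.inr hα0)
  have hh_cont : ContinuousOn (fun s => f s * u s + g s * u s ^ α) (Ici t₀) :=
    (hf_cont.mul hu_cont).add (hg_cont.mul huα_cont)
  set v : ℝ → ℝ := fun t => c + ∫ s in t₀..t, (f s * u s + g s * u s ^ α) with hvdef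
  have hv_cont : ContinuousOn v (Ici t₀) :=
    continuousOn_const.add (primCont t₀ _ hh_cont)
  have hv_pos : ∀ t ∈ Ici t₀, 0 < v t := by
    intro t ht
    have hnn : 0 ≤ ∫ s in t₀..t, (f s * u s + g s * u s ^ α) := by
      apply intervalIntegral.integral_nonneg ht
      intro s hs
      have hs' : s ∈ Ici t₀ := hs.1
      have := hu_nonneg s hs'
      have := hf_nonneg s hs'
      have := hg_nonneg s hs'
      have : 0 ≤ u s ^ α := Real.rpow_nonneg (hu_nonneg s hs') α
      positivity
    simpa [v] using add_pos_of_pos_of_nonneg hc hnn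
  have hu_le_v : ∀ t ∈ Ici t₀, u t ≤ v t := fun t ht => hineq t ht
  set F : ℝ → ℝ := fun t => ∫ s in t₀..t, f s with hFdef
  have hF_cont : ContinuousOn F (Ici t₀) := primCont t₀ f hf_cont
  set E : ℝ → ℝ := fun t => Real.exp (-β * F t) with hEdef
  have hE_cont : ContinuousOn E (Ici t₀) :=
    Real.continuous_exp.comp_continuousOn (continuousOn_const.mul hF_cont)
  have hgE_cont : ContinuousOn (fun s => g s * E s) (Ici t₀) := hg_cont.mul hE_cont
  set G : ℝ → ℝ := fun t => ∫ s in t₀..t, g s * E s with hGdef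
  have hG_cont : ContinuousOn G (Ici t₀) := primCont t₀ _ hgE_cont
  set φ : ℝ → ℝ := fun t => E t * v t ^ β - β * G t with hφdef
  have hφ_cont : ContinuousOn φ (Ici t₀) :=
    ((hE_cont.mul (hv_cont.rpow_const (fun x hx => Or.inl (hv_pos x hx).ne'))).sub
      (continuousOn_const.mul hG_cont))
  -- derivative of φ on the interior
  have hφ_deriv : ∀ x ∈ Ioi t₀,
      HasDerivAt φ
        ((Real.exp (-β * F x) * (-β * f x)) * v x ^ β +
          E x * ((f x * u x + g x * u x ^ α) * β * v x ^ (β - 1)) -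
          β * (g x * E x)) x := by
    intro x hx
    have hxI : x ∈ Ici t₀ := mem_Ici.mpr (le_of_lt (mem_Ioi.mp hx))
    have hF' : HasDerivAt F (f x) x := primDeriv t₀ f hf_cont hx
    have hE' : HasDerivAt E (Real.exp (-β * F x) * (-β * f x)) x :=
      (hF'.const_mul (-β)).exp
    have hv' : HasDerivAt v (f x * u x + g x * u x ^ α) x := by
      simpa [v] using (primDeriv t₀ _ hh_cont hx).const_add c
    have hW' : HasDerivAt (fun t => v t ^ β)
        ((f x * u x + g x * u x ^ α) * β * v x ^ (β - 1)) x :=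
      hv'.rpow_const (Or.inl (hv_pos x hxI).ne')
    have hG' : HasDerivAt G (g x * E x) x := primDeriv t₀ _ hgE_cont hx
    exact (hE'.mul hW').sub (hG'.const_mul β)
  have hderiv_nonpos : ∀ x ∈ Ioi t₀,
      (Real.exp (-β * F x) * (-β * f x)) * v x ^ β +
        E x * ((f x * u x + g x * u x ^ α) * β * v x ^ (β - 1)) -
        β * (g x * E x) ≤ 0 := by
    intro x hx
    have hxI : x ∈ Ici t₀ := mem_Ici.mpr (le_of_lt (mem_Ioi.mp hx))
    have hvp := hv_pos x hxI
    have huv := hu_le_v x hxI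
    have hun := hu_nonneg x hxI
    have hfn := hf_nonneg x hxI
    have hgn := hg_nonneg x hxI
    have hEpos : 0 < E x := Real.exp_pos _
    have hvβ1 : v x ^ (β - 1) = v x ^ (-α) := by norm_num [hβdef]
    -- key pointwise inequality
    have h1 : u x * v x ^ (-α) ≤ v x ^ β := by
      have : v x * v x ^ (-α) = v x ^ β := by
        rw [hβdef, sub_eq_add_neg, Real.rpow_add hvp, Real.rpow_one]
      calc u x * v x ^ (-α) ≤ v x * v x ^ (-α) :=
            mul_le_mul_of_nonneg_right huv (Real.rpow_nonneg hvp.le _)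
        _ = v x ^ β := this
    have h2 : u x ^ α * v x ^ (-α) ≤ 1 := by
      have hmono : u x ^ α ≤ v x ^ α := Real.rpow_le_rpow hun huv hα0
      have : v x ^ α * v x ^ (-α) = 1 := by
        rw [← Real.rpow_add hvp]; simp
      calc u x ^ α * v x ^ (-α) ≤ v x ^ α * v x ^ (-α) :=
            mul_le_mul_of_nonneg_right hmono (Real.rpow_nonneg hvp.le _)
        _ = 1 := this
    have hexp : Real.exp (-β * F x) = E x := rfl
    rw [hexp, hvβ1]
    have hsum : (f x * u x + g x * u x ^ α) * v x ^ (-α) ≤ f x * v x ^ β + g x := by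
      have hA : f x * (u x * v x ^ (-α)) ≤ f x * v x ^ β :=
        mul_le_mul_of_nonneg_left h1 hfn
      have hB : g x * (u x ^ α * v x ^ (-α)) ≤ g x * 1 :=
        mul_le_mul_of_nonneg_left h2 hgn
      nlinarith [hA, hB]
    nlinarith [mul_le_mul_of_nonneg_left hsum (mul_pos hEpos hβ).le]
  -- φ is antitone on Ici t₀
  have hanti : AntitoneOn φ (Ici t₀) := by
    apply antitoneOn_of_deriv_nonpos (convex_Ici t₀) hφ_cont
    · intro x hx
      rw [interior_Ici] at hx
      exact ((hφ_deriv x hx).differentiableAt).differentiableWithinAt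
    · intro x hx
      rw [interior_Ici] at hx
      rw [(hφ_deriv x hx).deriv]
      exact hderiv_nonpos x hx
  intro t ht
  have hφt : φ t ≤ φ t₀ := hanti self_mem_Ici ht ht
  have hφt₀ : φ t₀ = c ^ β := by
    simp [φ, E, F, G, v, intervalIntegral.integral_same]
  rw [hφt₀] at hφt
  -- unfold: E t * v t ^ β - β * G t ≤ c ^ β
  have hEt : E t = Real.exp (-β * F t) := rfl
  have hexp_pos : (0:ℝ) < Real.exp (β * F t) := Real.exp_pos _
  have hvβ_le : v t ^ β ≤ (c ^ β + β * G t) * Real.exp (β * F t) := by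
    have hEinv : E t * Real.exp (β * F t) = 1 := by
      rw [hEt, ← Real.exp_add]; ring_nf; simp
    have hEv : E t * v t ^ β ≤ c ^ β + β * G t := by
      have : E t * v t ^ β - β * G t ≤ c ^ β := hφt
      linarith
    have hrw : v t ^ β = (E t * v t ^ β) * Real.exp (β * F t) := by
      rw [mul_comm (E t), mul_assoc, hEinv, mul_one]
    rw [hrw]
    exact mul_le_mul_of_nonneg_right hEv hexp_pos.le
  -- rewrite RHS
  have hf_int : ∀ s ∈ Ici t₀, IntervalIntegrable f MeasureTheory.volume t₀ s := by
    intro s hs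
    exact (hf_cont.mono (by rw [uIcc_of_le hs]; exact Icc_subset_Ici_self)).intervalIntegrable
  have hGt : Real.exp (β * F t) * G t =
      ∫ s in t₀..t, g s * Real.exp (β * ∫ r in s..t, f r) := by
    rw [hGdef]
    rw [← intervalIntegral.integral_const_mul]
    apply intervalIntegral.integral_congr
    intro s hs
    rw [uIcc_of_le ht] at hs
    have hsI : s ∈ Ici t₀ := hs.1
    have hsub : (∫ r in t₀..t, f r) - ∫ r in t₀..s, f r = ∫ r in s..t, f r :=
      intervalIntegral.integral_interval_sub_left (hf_int t ht) (hf_int s hsI)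
    simp only [E]
    rw [← hsub]
    rw [show β * ((∫ r in t₀..t, f r) - ∫ r in t₀..s, f r)
        = β * F t + (-β * F s) by simp only [F]; ring]
    rw [Real.exp_add]
    ring
  have huvβ : u t ^ β ≤ v t ^ β :=
    Real.rpow_le_rpow (hu_nonneg t ht) (hu_le_v t ht) hβ.le
  calc u t ^ β ≤ v t ^ β := huvβ
    _ ≤ (c ^ β + β * G t) * Real.exp (β * F t) := hvβ_le
    _ = c ^ β * Real.exp (β * F t) + β * (Real.exp (β * F t) * G t) := by ring
    _ = c ^ β * Real.exp (β * ∫ s in t₀..t, f s) +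
        β * ∫ s in t₀..t, g s * Real.exp (β * ∫ r in s..t, f r) := by rw [hGt]

/-- Nonlinear Gronwall inequality, case 0 ≤ α < 1: if
u(t) ≤ c + ∫_{t₀}^t (f(s)u(s) + g(s)u(s)^α) ds on [t₀,∞) with u, f, g continuous
and nonnegative and c ≥ 0, then
u(t)^{1−α} ≤ c^{1−α} exp((1−α)∫_{t₀}^t f) + (1−α)∫_{t₀}^t g(s) exp((1−α)∫_s^t f) ds. -/
theorem gronwall_alpha_lt_one (t₀ c α : ℝ) (hc : 0 ≤ c) (hα0 : 0 ≤ α) (hα1 : α < 1)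
    (u f g : ℝ → ℝ)
    (hu_cont : ContinuousOn u (Ici t₀))
    (hf_cont : ContinuousOn f (Ici t₀)) (hg_cont : ContinuousOn g (Ici t₀))
    (hu_nonneg : ∀ t ∈ Ici t₀, 0 ≤ u t)
    (hf_nonneg : ∀ t ∈ Ici t₀, 0 ≤ f t) (hg_nonneg : ∀ t ∈ Ici t₀, 0 ≤ g t)
    (hineq : ∀ t ∈ Ici t₀, u t ≤ c + ∫ s in t₀..t, (f s * u s + g s * u s ^ α)) :
    ∀ t ∈ Ici t₀,
      u t ^ (1 - α) ≤
        c ^ (1 - α) * Real.exp ((1 - α) * ∫ s in t₀..t, f s) +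
          (1 - α) * ∫ s in t₀..t, g s * Real.exp ((1 - α) * ∫ r in s..t, f r) := by
  intro t ht
  have hβ : (0:ℝ) < 1 - α := by linarith
  set A := Real.exp ((1 - α) * ∫ s in t₀..t, f s) with hA
  set B := (1 - α) * ∫ s in t₀..t, g s * Real.exp ((1 - α) * ∫ r in s..t, f r) with hB
  have key : ∀ ε > (0:ℝ), u t ^ (1 - α) ≤ (c + ε) ^ (1 - α) * A + B := by
    intro ε hε
    refine gronwall_key t₀ (c + ε) α (by linarith) hα0 hα1 u f g hu_cont hf_cont hg_cont
      hu_nonneg hf_nonneg hg_nonneg ?_ t ht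
    intro s hs
    have := hineq s hs
    linarith
  have htendsto : Filter.Tendsto (fun ε : ℝ => (c + ε) ^ (1 - α) * A + B)
      (nhdsWithin 0 (Ioi 0)) (nhds (c ^ (1 - α) * A + B)) := by
    have h1 : ContinuousAt (fun x : ℝ => x ^ (1 - α)) c :=
      Real.continuousAt_rpow_const c (1 - α) (Or.inr hβ.le)
    have h2 : Filter.Tendsto (fun ε : ℝ => c + ε) (nhdsWithin 0 (Ioi 0)) (nhds c) := by
      have : Filter.Tendsto (fun ε : ℝ => c + ε) (nhds 0) (nhds (c + 0)) :=
        (continuous_const.add continuous_id).tendsto 0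
      simpa using this.mono_left nhdsWithin_le_nhds
    exact ((h1.tendsto.comp h2).mul_const A).add_const B
  refine ge_of_tendsto htendsto ?_
  filter_upwards [eventually_mem_nhdsWithin] with ε hε
  exact key ε hε
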